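/- Let (μ, W) be a matrix weight. Suppose there exist a Borel set X ⊆ ℝ and a real number c > 0 such that the function x ↦ W(x) is Bochner integrable over X with respect to μ and ∫_X W(x) dμ(x) = c·I, where I is the identity matrix. Then every T ∈ 𝒜 is Hermitian, and consequently T W(x) = W(x) T for μ-almost every x. -/

import Mathlib

open Matrix MeasureTheory ComplexOrder

attribute [local instance] Matrix.normedAddCommGroup Matrix.normedSpace

/-- If for a matrix weight `(μ, W)` there is a Borel set `X` and `c > 0` with
`∫_X W dμ = c • I`, then every `T ∈ 𝒜` is Hermitian and commutes with `W(x)` μ-a.e. -/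
theorem hermitian_of_integral_scalar_identity (N : ℕ) (hN : 1 ≤ N)
    (μ : Measure ℝ) [SigmaFinite μ]
    (W : ℝ → Matrix (Fin N) (Fin N) ℂ)
    (hWmeas : ∀ i j, Measurable fun x => W x i j)
    (hWpos : ∀ᵐ x ∂μ, (W x).PosDef)
    (X : Set ℝ) (hX : MeasurableSet X)
    (hint : @IntegrableOn _ _ _ _ NormedAddCommGroup.toENormedAddCommMonoid.toContinuousENorm (fun x => W x) X μ)
    (c : ℝ) (hc : 0 < c)
    (hI : ∫ x in X, W x ∂μ = (c : ℂ) • (1 : Matrix (Fin N) (Fin N) ℂ))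
    (T : Matrix (Fin N) (Fin N) ℂ)
    (hT : ∀ᵐ x ∂μ, T * W x = W x * Tᴴ) :
    T = Tᴴ ∧ (∀ᵐ x ∂μ, T * W x = W x * T) := by
  have hT' : ∀ᵐ x ∂μ.restrict X, T * W x = W x * Tᴴ := ae_restrict_of_ae hT
  set L : Matrix (Fin N) (Fin N) ℂ →L[ℂ] Matrix (Fin N) (Fin N) ℂ :=
    (LinearMap.mulLeft ℂ T).toContinuousLinearMap with hL
  set R : Matrix (Fin N) (Fin N) ℂ →L[ℂ] Matrix (Fin N) (Fin N) ℂ :=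
    (LinearMap.mulRight ℂ Tᴴ).toContinuousLinearMap with hR
  have h1 : ∫ x in X, T * W x ∂μ = T * ∫ x in X, W x ∂μ := by
    exact L.integral_comp_comm hint
  have h2 : ∫ x in X, W x * Tᴴ ∂μ = (∫ x in X, W x ∂μ) * Tᴴ := by
    exact R.integral_comp_comm hint
  have heq : T * ∫ x in X, W x ∂μ = (∫ x in X, W x ∂μ) * Tᴴ := by
    rw [← h1, ← h2]
    exact integral_congr_ae hT'
  rw [hI] at heq
  have hc' : (c : ℂ) ≠ 0 := by exact_mod_cast hc.ne'
  have hTT : T = Tᴴ := by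
    have : (c : ℂ) • T = (c : ℂ) • Tᴴ := by
      simpa [Matrix.mul_smul, Matrix.smul_mul] using heq
    exact smul_right_injective _ hc' this
  exact ⟨hTT, by filter_upwards [hT] with x hx; rw [hx, ← hTT]⟩
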